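/- Faà di Bruno's formula: if f : ℝ → ℝ and u : ℝ → ℝ are r times continuously differentiable, then (f ∘ u)^(r)(t) = Σ over multi-indices s = (s_1,…,s_r) with Σ_ν ν s_ν = r of (r!/(s_1!⋯s_r!)) f^(|s|)(u(t)) Π_{j=1}^{r} (u^(j)(t)/j!)^{s_j}, where |s| = s_1 + ⋯ + s_r. -/

import Mathlib

open Finset

namespace Faa5

noncomputable section




/-- weighted sum ∑ ν * s ν -/
def wsum (s : ℕ →₀ ℕ) : ℕ := s.sum fun ν n => ν * n
/-- total degree ∑ s ν -/
def mdeg (s : ℕ →₀ ℕ) : ℕ := s.sum fun _ n => n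
/-- product of factorials -/
def gfac (s : ℕ →₀ ℕ) : ℝ := s.prod fun _ n => (n.factorial : ℝ)
/-- monomial -/
def Qv (V : ℕ → ℝ) (s : ℕ →₀ ℕ) : ℝ := s.prod fun ν n => V ν ^ n

def Dset (r : ℕ) : Finset (ℕ →₀ ℕ) :=
  (Finset.Iic (∑ ν ∈ Finset.Icc 1 r, Finsupp.single ν r)).filter fun s => wsum s = r

lemma le_wsum (s : ℕ →₀ ℕ) (ν : ℕ) : ν * s ν ≤ wsum s := by
  by_cases h : s ν = 0
  · simp [h]
  · exact Finset.single_le_sum (f := fun μ => μ * s μ) (fun i _ => Nat.zero_le _)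
      (Finsupp.mem_support_iff.2 h)

lemma Bval (r ν : ℕ) : (∑ μ ∈ Finset.Icc 1 r, Finsupp.single μ r) ν
    = if ν ∈ Finset.Icc 1 r then r else 0 := by
  classical
  rw [Finsupp.finset_sum_apply]
  simp [Finsupp.single_apply]

lemma mem_Dset {r : ℕ} {s : ℕ →₀ ℕ} : s ∈ Dset r ↔ s 0 = 0 ∧ wsum s = r := by
  classical
  simp only [Dset, Finset.mem_filter, Finset.mem_Iic, Finsupp.le_def]
  constructor
  · rintro ⟨hle, hw⟩
    refine ⟨?_, hw⟩
    have := hle 0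
    rw [Bval] at this
    simpa using this
  · rintro ⟨h0, hw⟩
    refine ⟨fun ν => ?_, hw⟩
    rw [Bval]
    rcases Nat.eq_zero_or_pos ν with rfl | hν
    · simp [h0]
    · by_cases hz : s ν = 0
      · simp [hz]
      · have h1 : ν * s ν ≤ r := hw ▸ le_wsum s ν
        have hν2 : ν ≤ r := le_trans (Nat.le_mul_of_pos_right ν (Nat.pos_of_ne_zero hz)) h1
        have hs2 : s ν ≤ r := le_trans (Nat.le_mul_of_pos_left (s ν) hν) h1
        have h1' : 1 ≤ ν := hν
        simp only [Finset.mem_Icc, h1', hν2, and_self, if_true]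
        exact hs2

-- additivity lemmas
lemma wsum_add (a b : ℕ →₀ ℕ) : wsum (a + b) = wsum a + wsum b := by
  classical
  exact Finsupp.sum_add_index' (by simp) (by intro a b c; ring)

lemma mdeg_add (a b : ℕ →₀ ℕ) : mdeg (a + b) = mdeg a + mdeg b := by
  classical
  exact Finsupp.sum_add_index' (by simp) (by intro a b c; rfl)

lemma Qv_add (V : ℕ → ℝ) (a b : ℕ →₀ ℕ) : Qv V (a + b) = Qv V a * Qv V b := by
  classical
  exact Finsupp.prod_add_index' (by simp) (by intro a b c; rw [pow_add])

@[simp] lemma wsum_single (ν n : ℕ) : wsum (Finsupp.single ν n) = ν * n := by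
  classical simp [wsum, Finsupp.sum_single_index]

@[simp] lemma mdeg_single (ν n : ℕ) : mdeg (Finsupp.single ν n) = n := by
  classical simp [mdeg, Finsupp.sum_single_index]

@[simp] lemma Qv_single (V : ℕ → ℝ) (ν n : ℕ) : Qv V (Finsupp.single ν n) = V ν ^ n := by
  classical simp [Qv, Finsupp.prod_single_index]

lemma sub_add_single {s : ℕ →₀ ℕ} {ν : ℕ} (h : s ν ≠ 0) :
    s - Finsupp.single ν 1 + Finsupp.single ν 1 = s := by
  ext k
  simp only [Finsupp.coe_add, Finsupp.coe_tsub, Pi.add_apply, Pi.sub_apply,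
    Finsupp.single_apply]
  rcases eq_or_ne ν k with rfl | hk
  · simp; omega
  · simp [hk]

lemma gfac_pos (s : ℕ →₀ ℕ) : 0 < gfac s := by
  apply Finset.prod_pos
  intro i _
  simp only []
  exact_mod_cast Nat.factorial_pos _

/-- gfac of a bump -/
lemma gfac_add_single (s : ℕ →₀ ℕ) (ν : ℕ) :
    gfac (s + Finsupp.single ν 1) = gfac s * (s ν + 1) := by
  classical
  set s' : ℕ →₀ ℕ := s + Finsupp.single ν 1 with hs'
  set T := insert ν s.support with hT
  have hsub1 : s'.support ⊆ T := by
    refine subset_trans Finsupp.support_add ?_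
    apply Finset.union_subset
    · exact Finset.subset_insert _ _
    · refine subset_trans Finsupp.support_single_subset ?_
      simp [hT]
  have hsub2 : s.support ⊆ T := Finset.subset_insert _ _
  have hν : ν ∈ T := Finset.mem_insert_self _ _
  have e1 : gfac s' = ∏ k ∈ T, ((s' k).factorial : ℝ) :=
    Finsupp.prod_of_support_subset _ hsub1 _ (by simp)
  have e2 : gfac s = ∏ k ∈ T, ((s k).factorial : ℝ) :=
    Finsupp.prod_of_support_subset _ hsub2 _ (by simp)
  rw [e1, e2, ← Finset.mul_prod_erase T _ hν, ← Finset.mul_prod_erase T _ hν]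
  have h3 : ∀ k ∈ T.erase ν, ((s' k).factorial : ℝ) = ((s k).factorial : ℝ) := by
    intro k hk
    have hkν : k ≠ ν := Finset.ne_of_mem_erase hk
    have : s' k = s k := by simp [hs', Finsupp.single_apply, hkν.symm]
    rw [this]
  rw [Finset.prod_congr rfl h3]
  have h4 : s' ν = s ν + 1 := by simp [hs']
  rw [h4, Nat.factorial_succ]
  push_cast
  ring

/-- Qv of s - single, for s ν ≠ 0 -/
lemma Qv_sub_single (V : ℕ → ℝ) {s : ℕ →₀ ℕ} {ν : ℕ} (h : s ν ≠ 0) :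
    Qv V (s - Finsupp.single ν 1)
      = (∏ k ∈ s.support.erase ν, V k ^ s k) * V ν ^ (s ν - 1) := by
  classical
  have hν : ν ∈ s.support := Finsupp.mem_support_iff.2 h
  set s' : ℕ →₀ ℕ := s - Finsupp.single ν 1 with hs'
  have hsub : s'.support ⊆ s.support := Finsupp.support_tsub
  have e1 : Qv V s' = ∏ k ∈ s.support, V k ^ (s' k) :=
    Finsupp.prod_of_support_subset _ hsub _ (by simp)
  rw [e1, ← Finset.mul_prod_erase s.support _ hν]
  have h3 : ∀ k ∈ s.support.erase ν, V k ^ (s' k) = V k ^ s k := by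
    intro k hk
    have hkν : k ≠ ν := Finset.ne_of_mem_erase hk
    have : s' k = s k := by simp [hs', Finsupp.single_apply, hkν.symm]
    rw [this]
  rw [Finset.prod_congr rfl h3]
  have h4 : s' ν = s ν - 1 := by simp [hs']
  rw [h4]
  ring



section comb
variable {r : ℕ}

lemma apply_add_single (s : ℕ →₀ ℕ) (a k : ℕ) :
    ((s + Finsupp.single a 1 : ℕ →₀ ℕ)) k = s k + (if a = k then 1 else 0) := by
  simp [Finsupp.single_apply]

lemma apply_sub_single (s : ℕ →₀ ℕ) (a k : ℕ) :
    ((s - Finsupp.single a 1 : ℕ →₀ ℕ)) k = s k - (if a = k then 1 else 0) := by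
  simp [Finsupp.tsub_apply, Finsupp.single_apply]

lemma supp_pos {s : ℕ →₀ ℕ} (h0 : s 0 = 0) {ν : ℕ} (hν : ν ∈ s.support) : 1 ≤ ν := by
  rcases Nat.eq_zero_or_pos ν with rfl | h
  · exact absurd h0 (Finsupp.mem_support_iff.1 hν)
  · exact h

/-- the elementary move: decrease multiplicity at ν, increase at ν+1 -/
def move (s : ℕ →₀ ℕ) (ν : ℕ) : ℕ →₀ ℕ :=
  s - Finsupp.single ν 1 + Finsupp.single (ν + 1) 1

lemma decomp {s : ℕ →₀ ℕ} {ν : ℕ} (h : s ν ≠ 0) :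
    s = (s - Finsupp.single ν 1) + Finsupp.single ν 1 := (sub_add_single h).symm

lemma wsum_move {s : ℕ →₀ ℕ} {ν : ℕ} (h : s ν ≠ 0) : wsum (move s ν) = wsum s + 1 := by
  conv_rhs => rw [decomp h]
  rw [move, wsum_add, wsum_add, wsum_single, wsum_single]
  ring

lemma mdeg_move {s : ℕ →₀ ℕ} {ν : ℕ} (h : s ν ≠ 0) : mdeg (move s ν) = mdeg s := by
  conv_rhs => rw [decomp h]
  rw [move, mdeg_add, mdeg_add, mdeg_single, mdeg_single]

lemma gfac_move {s : ℕ →₀ ℕ} {ν : ℕ} (h : s ν ≠ 0) :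
    gfac (move s ν) = gfac (s - Finsupp.single ν 1) * (((s - Finsupp.single ν 1 : ℕ →₀ ℕ)) (ν+1) + 1) :=
  gfac_add_single _ _

/-- Step A : rewriting the product-rule term as a monomial of the moved index -/
lemma stepA (V : ℕ → ℝ) {s : ℕ →₀ ℕ} {ν : ℕ} (h : s ν ≠ 0) :
    (∏ k ∈ s.support.erase ν, V k ^ s k) *
        ((s ν : ℝ) * V ν ^ (s ν - 1) * (((ν : ℝ) + 1) * V (ν+1)))
      = (s ν : ℝ) * ((ν : ℝ) + 1) * Qv V (move s ν) := by
  rw [move, Qv_add, Qv_single, Qv_sub_single V h]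
  ring

end comb

section combmain
variable (r : ℕ) (X V : ℕ → ℝ)

lemma add_sub_single (s : ℕ →₀ ℕ) (ν : ℕ) :
    s + Finsupp.single ν 1 - Finsupp.single ν 1 = s := by
  ext k
  simp only [Finsupp.tsub_apply, apply_add_single, Finsupp.single_apply]
  split_ifs <;> omega

lemma gfac_eq_sub {s : ℕ →₀ ℕ} {ν : ℕ} (h : s ν ≠ 0) :
    gfac s = gfac (s - Finsupp.single ν 1) * (s ν : ℝ) := by
  conv_lhs => rw [decomp h]
  rw [gfac_add_single, apply_sub_single]
  simp only [if_pos rfl]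
  congr 1
  have : (s ν - 1) + 1 = s ν := by omega
  exact_mod_cast congrArg (Nat.cast (R := ℝ)) this

lemma part1 :
    ∑ s ∈ Dset r, ((r.factorial : ℝ)/gfac s) * (X (mdeg s + 1) * (V 1 * Qv V s))
    = ∑ s' ∈ Dset (r+1),
        (if s' 1 ≠ 0 then ((s' 1 : ℝ)) * ((r.factorial : ℝ)/gfac s') * (X (mdeg s') * Qv V s')
         else 0) := by
  classical
  rw [← Finset.sum_filter]
  refine Finset.sum_nbij' (fun s => s + Finsupp.single 1 1) (fun s' => s' - Finsupp.single 1 1)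
    ?_ ?_ ?_ ?_ ?_
  · intro s hs
    obtain ⟨h0, hw⟩ := mem_Dset.1 hs
    refine Finset.mem_filter.2 ⟨mem_Dset.2 ⟨?_, ?_⟩, ?_⟩
    · rw [apply_add_single]; simp [h0]
    · rw [wsum_add, wsum_single, hw]
    · rw [apply_add_single]; simp
  · intro s' hs'
    obtain ⟨hs', h1⟩ := Finset.mem_filter.1 hs'
    obtain ⟨h0, hw⟩ := mem_Dset.1 hs'
    refine mem_Dset.2 ⟨?_, ?_⟩
    · rw [apply_sub_single]; simp [h0]
    · have := wsum_add (s' - Finsupp.single 1 1) (Finsupp.single 1 1)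
      rw [sub_add_single h1] at this
      rw [wsum_single] at this
      omega
  · intro s _
    exact add_sub_single s 1
  · intro s' hs'
    obtain ⟨_, h1⟩ := Finset.mem_filter.1 hs'
    exact sub_add_single h1
  · intro s hs
    rw [apply_add_single, if_pos rfl, gfac_add_single, mdeg_add, mdeg_single,
      Qv_add, Qv_single, pow_one]
    have hg := (gfac_pos s).ne'
    have h1 : ((s 1 : ℝ) + 1) ≠ 0 := by positivity
    push_cast
    field_simp

lemma part2 :
    ∑ s ∈ Dset r, ∑ ν ∈ s.support,
        ((r.factorial : ℝ)/gfac s) * ((s ν : ℝ) * ((ν : ℝ)+1) * (X (mdeg s) * Qv V (move s ν)))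
    = ∑ s' ∈ Dset (r+1), ∑ ν ∈ s'.support.filter (fun ν => 2 ≤ ν),
        ((ν : ℝ)) * (s' ν : ℝ) * ((r.factorial : ℝ)/gfac s') * (X (mdeg s') * Qv V s') := by
  classical
  rw [Finset.sum_sigma', Finset.sum_sigma']
  refine Finset.sum_nbij'
    (fun p => ⟨move p.1 p.2, p.2 + 1⟩)
    (fun p => ⟨p.1 - Finsupp.single p.2 1 + Finsupp.single (p.2 - 1) 1, p.2 - 1⟩)
    ?_ ?_ ?_ ?_ ?_
  · rintro ⟨s, ν⟩ hp
    simp only [Finset.mem_sigma] at hp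
    dsimp only
    obtain ⟨hs, hν⟩ := hp
    obtain ⟨h0, hw⟩ := mem_Dset.1 hs
    have hsν : s ν ≠ 0 := Finsupp.mem_support_iff.1 hν
    have hν1 : 1 ≤ ν := supp_pos h0 hν
    refine Finset.mem_sigma.2 ⟨mem_Dset.2 ⟨?_, ?_⟩, ?_⟩
    · rw [move, apply_add_single, apply_sub_single]
      have e1 : ¬ (ν = 0) := by omega
      have e2 : ¬ (ν + 1 = 0) := by omega
      simp [e1, e2, h0]
    · rw [wsum_move hsν, hw]
    · refine Finset.mem_filter.2 ⟨Finsupp.mem_support_iff.2 ?_, ?_⟩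
      · show (move s ν) (ν + 1) ≠ 0
        rw [move, apply_add_single, apply_sub_single]
        have e1 : ¬ (ν = ν + 1) := by omega
        simp [e1]
      · show 2 ≤ ν + 1
        omega
  · rintro ⟨s', ν⟩ hp
    simp only [Finset.mem_sigma] at hp
    dsimp only
    obtain ⟨hs', hν⟩ := hp
    obtain ⟨hν, h2ν⟩ := Finset.mem_filter.1 hν
    obtain ⟨h0, hw⟩ := mem_Dset.1 hs'
    have hsν : s' ν ≠ 0 := Finsupp.mem_support_iff.1 hν
    refine Finset.mem_sigma.2 ⟨mem_Dset.2 ⟨?_, ?_⟩, ?_⟩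
    · rw [apply_add_single, apply_sub_single]
      have e1 : ¬ (ν = 0) := by omega
      have e2 : ¬ (ν - 1 = 0) := by omega
      simp [e1, e2, h0]
    · have h1 := wsum_add (s' - Finsupp.single ν 1) (Finsupp.single ν 1)
      rw [sub_add_single hsν, wsum_single] at h1
      have h2 := wsum_add (s' - Finsupp.single ν 1) (Finsupp.single (ν - 1) 1)
      rw [wsum_single] at h2
      rw [h2]
      omega
    · refine Finsupp.mem_support_iff.2 ?_
      rw [apply_add_single, apply_sub_single]
      have e1 : ¬ (ν = ν - 1) := by omega
      simp [e1]
  · rintro ⟨s, ν⟩ hp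
    simp only [Finset.mem_sigma] at hp
    dsimp only
    obtain ⟨hs, hν⟩ := hp
    obtain ⟨h0, hw⟩ := mem_Dset.1 hs
    have hsν : s ν ≠ 0 := Finsupp.mem_support_iff.1 hν
    have e2 : ν + 1 - 1 = ν := by omega
    simp only [move, e2]
    congr 1
    ext k
    simp only [apply_add_single, Finsupp.tsub_apply, Finsupp.single_apply]
    rcases eq_or_ne ν k with rfl | hk
    · have e1 : ¬ (ν + 1 = ν) := by omega
      simp only [if_pos rfl, e1, if_false]
      split_ifs <;> omega
    · simp only [hk, if_false]
      split_ifs <;> omega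
  · rintro ⟨s', ν⟩ hp
    simp only [Finset.mem_sigma] at hp
    dsimp only
    obtain ⟨hs', hν⟩ := hp
    obtain ⟨hν, h2ν⟩ := Finset.mem_filter.1 hν
    have hsν : s' ν ≠ 0 := Finsupp.mem_support_iff.1 hν
    have e2 : ν - 1 + 1 = ν := by omega
    simp only [move, e2]
    congr 1
    ext k
    simp only [apply_add_single, Finsupp.tsub_apply, Finsupp.single_apply]
    rcases eq_or_ne ν k with rfl | hk
    · have e1 : ¬ (ν - 1 = ν) := by omega
      simp only [if_pos rfl, e1, if_false]
      split_ifs <;> omega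
    · simp only [hk, if_false]
      split_ifs <;> omega
  · rintro ⟨s, ν⟩ hp
    simp only [Finset.mem_sigma] at hp
    dsimp only
    obtain ⟨hs, hν⟩ := hp
    obtain ⟨h0, hw⟩ := mem_Dset.1 hs
    have hsν : s ν ≠ 0 := Finsupp.mem_support_iff.1 hν
    have e1 : ¬ (ν = ν + 1) := by omega
    have happ : (move s ν) (ν + 1) = s (ν + 1) + 1 := by
      rw [move, apply_add_single, apply_sub_single]
      simp [e1]
    simp only [happ, mdeg_move hsν, gfac_move hsν, apply_sub_single, e1, if_false,
      Nat.sub_zero, gfac_eq_sub hsν]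
    have hg := (gfac_pos (s - Finsupp.single ν 1)).ne'
    have ha : (s ν : ℝ) ≠ 0 := Nat.cast_ne_zero.2 hsν
    have hb : ((s (ν+1) : ℝ) + 1) ≠ 0 := by positivity
    push_cast
    field_simp

lemma comb :
    ∑ s ∈ Dset r, ((r.factorial : ℝ)/gfac s) *
        (X (mdeg s + 1) * V 1 * Qv V s
          + X (mdeg s) * ∑ ν ∈ s.support, (∏ k ∈ s.support.erase ν, V k ^ s k) *
              ((s ν : ℝ) * V ν ^ (s ν - 1) * (((ν : ℝ) + 1) * V (ν+1))))
    = ∑ s' ∈ Dset (r+1), (((r+1).factorial : ℝ)/gfac s') * (X (mdeg s') * Qv V s') := by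
  classical
  have hL : ∑ s ∈ Dset r, ((r.factorial : ℝ)/gfac s) *
        (X (mdeg s + 1) * V 1 * Qv V s
          + X (mdeg s) * ∑ ν ∈ s.support, (∏ k ∈ s.support.erase ν, V k ^ s k) *
              ((s ν : ℝ) * V ν ^ (s ν - 1) * (((ν : ℝ) + 1) * V (ν+1))))
      = (∑ s ∈ Dset r, ((r.factorial : ℝ)/gfac s) * (X (mdeg s + 1) * (V 1 * Qv V s)))
        + ∑ s ∈ Dset r, ∑ ν ∈ s.support,
            ((r.factorial : ℝ)/gfac s) *
              ((s ν : ℝ) * ((ν : ℝ)+1) * (X (mdeg s) * Qv V (move s ν))) := by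
    rw [← Finset.sum_add_distrib]
    refine Finset.sum_congr rfl fun s hs => ?_
    have hsum : ∑ ν ∈ s.support, (∏ k ∈ s.support.erase ν, V k ^ s k) *
              ((s ν : ℝ) * V ν ^ (s ν - 1) * (((ν : ℝ) + 1) * V (ν+1)))
        = ∑ ν ∈ s.support, (s ν : ℝ) * ((ν : ℝ) + 1) * Qv V (move s ν) :=
      Finset.sum_congr rfl fun ν hν => stepA V (Finsupp.mem_support_iff.1 hν)
    rw [hsum, mul_add]
    congr 1
    · ring
    · rw [Finset.mul_sum, Finset.mul_sum]
      exact Finset.sum_congr rfl fun ν _ => by ring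
  rw [hL, part1 r X V, part2 r X V, ← Finset.sum_add_distrib]
  refine Finset.sum_congr rfl fun s' hs' => ?_
  obtain ⟨h0, hw⟩ := mem_Dset.1 hs'
  have hfac : (((r+1).factorial : ℝ)/gfac s') * (X (mdeg s') * Qv V s')
      = ∑ ν ∈ s'.support, (ν : ℝ) * (s' ν : ℝ) *
          ((r.factorial : ℝ)/gfac s') * (X (mdeg s') * Qv V s') := by
    have h1 : ((r+1).factorial : ℝ) = (∑ ν ∈ s'.support, (ν : ℝ) * (s' ν : ℝ)) * r.factorial := by
      have h2 : (wsum s' : ℝ) = ∑ ν ∈ s'.support, (ν : ℝ) * (s' ν : ℝ) := by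
        rw [wsum, Finsupp.sum]
        push_cast
        rfl
      rw [Nat.factorial_succ, ← hw, ← h2]
      push_cast
      ring
    rw [h1, Finset.sum_mul, Finset.sum_div, Finset.sum_mul]
    exact Finset.sum_congr rfl fun ν _ => by ring
  rw [hfac, ← Finset.sum_filter_add_sum_filter_not s'.support (fun ν => 2 ≤ ν), add_comm]
  congr 1
  have hnot : s'.support.filter (fun ν => ¬ 2 ≤ ν) = if s' 1 = 0 then ∅ else {1} := by
    ext μ
    by_cases h1 : s' 1 = 0 <;>
      simp only [Finset.mem_filter, Finsupp.mem_support_iff, h1, if_true, if_false,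
        Finset.notMem_empty, Finset.mem_singleton, iff_false, not_and, not_not]
    · intro hμ
      by_contra hcon
      have hμ2 : μ = 0 ∨ μ = 1 := by omega
      rcases hμ2 with rfl | rfl
      · exact hμ h0
      · exact hμ h1
    · constructor
      · rintro ⟨hμ1, hμ2⟩
        have hμ3 : μ = 0 ∨ μ = 1 := by omega
        rcases hμ3 with rfl | rfl
        · exact absurd h0 hμ1
        · rfl
      · rintro rfl
        exact ⟨h1, by omega⟩
  rw [hnot]
  by_cases h1 : s' 1 = 0
  · simp [h1]
  · simp [h1]

end combmain

section analysis

lemma Dset_zero : Dset 0 = {0} := by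
  ext s
  rw [mem_Dset, Finset.mem_singleton]
  constructor
  · rintro ⟨h0, hw⟩
    ext ν
    rcases Nat.eq_zero_or_pos ν with rfl | hν
    · simpa using h0
    · have h1 : ν * s ν ≤ 0 := hw ▸ le_wsum s ν
      have h2 : ν * s ν = 0 := Nat.le_zero.1 h1
      rcases Nat.mul_eq_zero.1 h2 with h | h
      · omega
      · simpa using h
  · rintro rfl
    refine ⟨rfl, ?_⟩
    simp [wsum]

lemma supp_le {r : ℕ} {s : ℕ →₀ ℕ} (hs : s ∈ Dset r) {ν : ℕ} (hν : ν ∈ s.support) : ν ≤ r := by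
  obtain ⟨h0, hw⟩ := mem_Dset.1 hs
  have h1 : ν * s ν ≤ r := hw ▸ le_wsum s ν
  have h2 : s ν ≠ 0 := Finsupp.mem_support_iff.1 hν
  calc ν ≤ ν * s ν := Nat.le_mul_of_pos_right ν (Nat.pos_of_ne_zero h2)
    _ ≤ r := h1

lemma mdeg_le {r : ℕ} {s : ℕ →₀ ℕ} (hs : s ∈ Dset r) : mdeg s ≤ r := by
  obtain ⟨h0, hw⟩ := mem_Dset.1 hs
  calc mdeg s = ∑ ν ∈ s.support, s ν := rfl
    _ ≤ ∑ ν ∈ s.support, ν * s ν :=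
        Finset.sum_le_sum fun ν hν => Nat.le_mul_of_pos_left (s ν) (supp_pos h0 hν)
    _ = wsum s := rfl
    _ = r := hw

theorem faa : ∀ (r : ℕ) (f u : ℝ → ℝ), ContDiff ℝ r f → ContDiff ℝ r u → ∀ t : ℝ,
    iteratedDeriv r (f ∘ u) t
      = ∑ s ∈ Dset r, ((r.factorial : ℝ)/gfac s) *
          (iteratedDeriv (mdeg s) f (u t) *
            Qv (fun ν => iteratedDeriv ν u t / (ν.factorial : ℝ)) s) := by
  intro r
  induction r with
  | zero =>
    intro f u hf hu t
    rw [Dset_zero, Finset.sum_singleton]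
    simp [gfac, mdeg, Qv, iteratedDeriv_zero, Finsupp.prod_zero_index, Finsupp.sum_zero_index,
      Function.comp]
  | succ r ih =>
    intro f u hf hu t
    have hle : ((r : ℕ∞) : WithTop ℕ∞) ≤ ((r + 1 : ℕ) : ℕ∞) := by exact_mod_cast Nat.le_succ r
    have hfr : ContDiff ℝ r f := hf.of_le (by exact_mod_cast Nat.le_succ r)
    have hur : ContDiff ℝ r u := hu.of_le (by exact_mod_cast Nat.le_succ r)
    have hIH : iteratedDeriv r (f ∘ u) = fun x =>
        ∑ s ∈ Dset r, ((r.factorial : ℝ)/gfac s) *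
          (iteratedDeriv (mdeg s) f (u x) *
            Qv (fun ν => iteratedDeriv ν u x / (ν.factorial : ℝ)) s) :=
      funext (ih f u hfr hur)
    rw [iteratedDeriv_succ, hIH]
    have huder : HasDerivAt u (deriv u t) t := by
      have : DifferentiableAt ℝ u t := by
        have := hu.differentiable (by simp)
        exact this.differentiableAt
      exact this.hasDerivAt
    have hder : HasDerivAt (fun x =>
        ∑ s ∈ Dset r, ((r.factorial : ℝ)/gfac s) *
          (iteratedDeriv (mdeg s) f (u x) *
            Qv (fun ν => iteratedDeriv ν u x / (ν.factorial : ℝ)) s))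
        (∑ s ∈ Dset r, ((r.factorial : ℝ)/gfac s) *
          ((iteratedDeriv (mdeg s + 1) f (u t) * deriv u t) *
              Qv (fun ν => iteratedDeriv ν u t / (ν.factorial : ℝ)) s
            + iteratedDeriv (mdeg s) f (u t) *
               (∑ ν ∈ s.support,
                 (∏ k ∈ s.support.erase ν, (iteratedDeriv k u t / (k.factorial : ℝ)) ^ s k) •
                   ((s ν : ℝ) * (iteratedDeriv ν u t / (ν.factorial : ℝ)) ^ (s ν - 1) *
                     (iteratedDeriv (ν+1) u t / (ν.factorial : ℝ)))))) t := by
      refine HasDerivAt.fun_sum fun s hs => ?_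
      obtain ⟨h0, hw⟩ := mem_Dset.1 hs
      have hm : mdeg s ≤ r := mdeg_le hs
      have h1 : HasDerivAt (fun x => iteratedDeriv (mdeg s) f (u x))
          (iteratedDeriv (mdeg s + 1) f (u t) * deriv u t) t := by
        have hfd : DifferentiableAt ℝ (iteratedDeriv (mdeg s) f) (u t) := by
          have := hf.differentiable_iteratedDeriv (mdeg s)
            (by exact_mod_cast Nat.lt_succ_of_le hm)
          exact this.differentiableAt
        have hfder : HasDerivAt (iteratedDeriv (mdeg s) f)
            (iteratedDeriv (mdeg s + 1) f (u t)) (u t) := by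
          rw [iteratedDeriv_succ]
          exact hfd.hasDerivAt
        exact hfder.comp t huder
      have h2 : HasDerivAt (fun x =>
          Qv (fun ν => iteratedDeriv ν u x / (ν.factorial : ℝ)) s)
          (∑ ν ∈ s.support,
            (∏ k ∈ s.support.erase ν, (iteratedDeriv k u t / (k.factorial : ℝ)) ^ s k) •
              ((s ν : ℝ) * (iteratedDeriv ν u t / (ν.factorial : ℝ)) ^ (s ν - 1) *
                (iteratedDeriv (ν+1) u t / (ν.factorial : ℝ)))) t := by
        have hQ : ∀ x, Qv (fun ν => iteratedDeriv ν u x / (ν.factorial : ℝ)) s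
            = ∏ ν ∈ s.support, (iteratedDeriv ν u x / (ν.factorial : ℝ)) ^ s ν := fun x => rfl
        simp only [hQ]
        refine HasDerivAt.fun_finsetProd fun ν hν => ?_
        have hνr : ν ≤ r := supp_le hs hν
        have hud : DifferentiableAt ℝ (iteratedDeriv ν u) t := by
          have := hu.differentiable_iteratedDeriv ν
            (by exact_mod_cast Nat.lt_succ_of_le hνr)
          exact this.differentiableAt
        have huder2 : HasDerivAt (iteratedDeriv ν u) (iteratedDeriv (ν+1) u t) t := by
          rw [iteratedDeriv_succ]
          exact hud.hasDerivAt
        exact (huder2.div_const _).pow _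
      exact (h1.mul h2).const_mul _
    rw [hder.deriv]
    have hcomb := comb r (fun m => iteratedDeriv m f (u t))
      (fun ν => iteratedDeriv ν u t / (ν.factorial : ℝ))
    rw [← hcomb]
    refine Finset.sum_congr rfl fun s hs => ?_
    obtain ⟨h0, hw⟩ := mem_Dset.1 hs
    have hv1 : deriv u t = iteratedDeriv 1 u t / ((1 : ℕ).factorial : ℝ) := by
      simp [iteratedDeriv_one]
    have hinner : ∀ ν ∈ s.support,
        (∏ k ∈ s.support.erase ν, (iteratedDeriv k u t / (k.factorial : ℝ)) ^ s k) •
            ((s ν : ℝ) * (iteratedDeriv ν u t / (ν.factorial : ℝ)) ^ (s ν - 1) *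
              (iteratedDeriv (ν+1) u t / (ν.factorial : ℝ)))
          = (∏ k ∈ s.support.erase ν, (iteratedDeriv k u t / (k.factorial : ℝ)) ^ s k) *
              ((s ν : ℝ) * (iteratedDeriv ν u t / (ν.factorial : ℝ)) ^ (s ν - 1) *
                (((ν : ℝ) + 1) * (iteratedDeriv (ν+1) u t / ((ν+1).factorial : ℝ)))) := by
      intro ν hν
      rw [smul_eq_mul]
      congr 2
      have hfne : ((ν.factorial : ℕ) : ℝ) ≠ 0 := Nat.cast_ne_zero.2 (Nat.factorial_ne_zero ν)
      have hfne2 : (((ν+1).factorial : ℕ) : ℝ) ≠ 0 := Nat.cast_ne_zero.2 (Nat.factorial_ne_zero _)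
      rw [Nat.factorial_succ]
      push_cast
      field_simp
    rw [Finset.sum_congr rfl hinner, hv1]

end analysis

section final
variable (r : ℕ)

def toF (s : Fin r → Fin (r+1)) : ℕ →₀ ℕ :=
  ∑ j : Fin r, Finsupp.single (j.1+1) ((s j).1)

def fromF (σ : ℕ →₀ ℕ) : Fin r → Fin (r+1) :=
  fun j => ⟨min (σ (j.1+1)) r, Nat.lt_succ_of_le (Nat.min_le_right _ _)⟩

lemma toF_apply_succ (s : Fin r → Fin (r+1)) (j : Fin r) : toF r s (j.1+1) = (s j).1 := by
  classical
  rw [toF, Finsupp.finset_sum_apply]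
  rw [Finset.sum_eq_single j]
  · simp [Finsupp.single_apply]
  · intro b _ hb
    have : b.1 + 1 ≠ j.1 + 1 := by
      intro h
      exact hb (Fin.ext (by omega))
    simp [Finsupp.single_apply, this, Fin.val_inj, hb]
  · intro h
    exact absurd (Finset.mem_univ j) h

lemma toF_apply_notin (s : Fin r → Fin (r+1)) (ν : ℕ) (hν : ¬ (1 ≤ ν ∧ ν ≤ r)) :
    toF r s ν = 0 := by
  classical
  rw [toF, Finsupp.finset_sum_apply]
  refine Finset.sum_eq_zero fun j _ => ?_
  have hj := j.2
  have : j.1 + 1 ≠ ν := by omega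
  simp [Finsupp.single_apply, this]

lemma wsum_sum {ι : Type*} (T : Finset ι) (g : ι → ℕ →₀ ℕ) :
    wsum (∑ j ∈ T, g j) = ∑ j ∈ T, wsum (g j) := by
  classical
  induction T using Finset.induction_on with
  | empty => simp [wsum]
  | @insert a s h ih => rw [Finset.sum_insert h, Finset.sum_insert h, wsum_add, ih]

lemma mdeg_sum {ι : Type*} (T : Finset ι) (g : ι → ℕ →₀ ℕ) :
    mdeg (∑ j ∈ T, g j) = ∑ j ∈ T, mdeg (g j) := by
  classical
  induction T using Finset.induction_on with
  | empty => simp [mdeg]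
  | @insert a s h ih => rw [Finset.sum_insert h, Finset.sum_insert h, mdeg_add, ih]

lemma wsum_toF (s : Fin r → Fin (r+1)) : wsum (toF r s) = ∑ j : Fin r, (j.1+1) * (s j).1 := by
  rw [toF, wsum_sum]
  exact Finset.sum_congr rfl fun j _ => wsum_single _ _

lemma mdeg_toF (s : Fin r → Fin (r+1)) : mdeg (toF r s) = ∑ j : Fin r, (s j).1 := by
  rw [toF, mdeg_sum]
  exact Finset.sum_congr rfl fun j _ => mdeg_single _ _

lemma toF_support (s : Fin r → Fin (r+1)) :
    (toF r s).support ⊆ Finset.image (fun j : Fin r => j.1+1) Finset.univ := by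
  classical
  refine subset_trans Finsupp.support_finset_sum ?_
  intro ν hν
  obtain ⟨j, _, hj⟩ := Finset.mem_biUnion.1 hν
  have := Finsupp.support_single_subset hj
  rw [Finset.mem_singleton] at this
  exact Finset.mem_image.2 ⟨j, Finset.mem_univ j, this.symm⟩

lemma img_inj : ∀ a ∈ (Finset.univ : Finset (Fin r)), ∀ b ∈ Finset.univ,
    a.1 + 1 = b.1 + 1 → a = b := fun a _ b _ h => Fin.ext (by omega)

lemma gfac_toF (s : Fin r → Fin (r+1)) :
    gfac (toF r s) = ∏ j : Fin r, (((s j).1).factorial : ℝ) := by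
  classical
  rw [gfac, Finsupp.prod_of_support_subset _ (toF_support r s) _ (by simp),
    Finset.prod_image (img_inj r)]
  exact Finset.prod_congr rfl fun j _ => by rw [toF_apply_succ]

lemma Qv_toF (V : ℕ → ℝ) (s : Fin r → Fin (r+1)) :
    Qv V (toF r s) = ∏ j : Fin r, (V (j.1+1)) ^ (s j).1 := by
  classical
  rw [Qv, Finsupp.prod_of_support_subset _ (toF_support r s) _ (by simp),
    Finset.prod_image (img_inj r)]
  exact Finset.prod_congr rfl fun j _ => by rw [toF_apply_succ]

lemma fromF_toF (s : Fin r → Fin (r+1)) : fromF r (toF r s) = s := by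
  funext j
  refine Fin.ext ?_
  show min (toF r s (j.1+1)) r = (s j).1
  rw [toF_apply_succ]
  have := (s j).2
  omega

lemma toF_fromF {σ : ℕ →₀ ℕ} (hσ : σ ∈ Dset r) : toF r (fromF r σ) = σ := by
  classical
  obtain ⟨h0, hw⟩ := mem_Dset.1 hσ
  ext ν
  by_cases h : 1 ≤ ν ∧ ν ≤ r
  · set j : Fin r := ⟨ν - 1, by omega⟩ with hj
    have hν : ν = j.1 + 1 := by simp [hj]; omega
    rw [hν, toF_apply_succ]
    show min (σ (j.1+1)) r = σ (j.1+1)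
    have h1 : (j.1+1) * σ (j.1+1) ≤ r := hw ▸ le_wsum σ (j.1+1)
    have h2 : σ (j.1+1) ≤ (j.1+1) * σ (j.1+1) := Nat.le_mul_of_pos_left _ (by omega)
    omega
  · rw [toF_apply_notin _ _ _ h]
    by_contra hc
    have hm : ν ∈ σ.support := Finsupp.mem_support_iff.2 fun h' => hc h'.symm
    have := supp_pos h0 hm
    have := supp_le hσ hm
    omega

lemma bridge (X V : ℕ → ℝ) :
    ∑ σ ∈ Dset r, ((r.factorial : ℝ)/gfac σ) * (X (mdeg σ) * Qv V σ)
      = ∑ s : Fin r → Fin (r+1),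
          if (∑ ν : Fin r, (ν.1 + 1) * (s ν).1) = r then
            ((r.factorial : ℝ) / ∏ j : Fin r, (((s j).1).factorial : ℝ))
              * X (∑ j : Fin r, (s j).1)
              * ∏ j : Fin r, (V (j.1 + 1)) ^ (s j).1
          else 0 := by
  classical
  rw [← Finset.sum_filter]
  refine Finset.sum_nbij' (fromF r) (toF r) ?_ ?_ ?_ ?_ ?_
  · intro σ hσ
    refine Finset.mem_filter.2 ⟨Finset.mem_univ _, ?_⟩
    have h1 : ∑ j : Fin r, (j.1+1) * ((fromF r σ) j).1 = wsum (toF r (fromF r σ)) :=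
      (wsum_toF r _).symm
    rw [h1, toF_fromF r hσ]
    exact (mem_Dset.1 hσ).2
  · intro s hs
    obtain ⟨_, hP⟩ := Finset.mem_filter.1 hs
    refine mem_Dset.2 ⟨toF_apply_notin r s 0 (by omega), ?_⟩
    rw [wsum_toF]
    exact hP
  · intro σ hσ
    exact toF_fromF r hσ
  · intro s _
    exact fromF_toF r s
  · intro σ hσ
    have e1 : (∏ j : Fin r, ((((fromF r σ) j).1).factorial : ℝ)) = gfac σ := by
      rw [← gfac_toF, toF_fromF r hσ]
    have e2 : (∑ j : Fin r, ((fromF r σ) j).1) = mdeg σ := by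
      rw [← mdeg_toF, toF_fromF r hσ]
    have e3 : (∏ j : Fin r, (V (j.1 + 1)) ^ ((fromF r σ) j).1) = Qv V σ := by
      rw [← Qv_toF, toF_fromF r hσ]
    rw [e1, e2, e3]
    ring

end final

end

end Faa5

theorem stmt_5 (r : ℕ) (f u : ℝ → ℝ)
    (hf : ContDiff ℝ r f) (hu : ContDiff ℝ r u) (t : ℝ) :
    iteratedDeriv r (f ∘ u) t
      = ∑ s : Fin r → Fin (r + 1),
          if (∑ ν : Fin r, (ν.1 + 1) * (s ν).1) = r then
            ((r.factorial : ℝ) / ∏ j : Fin r, ((s j).1.factorial : ℝ))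
              * iteratedDeriv (∑ j : Fin r, (s j).1) f (u t)
              * ∏ j : Fin r, (iteratedDeriv (j.1 + 1) u t / ((j.1 + 1).factorial : ℝ)) ^ (s j).1
          else 0 := by
  rw [Faa5.faa r f u hf hu t,
    Faa5.bridge r (fun m => iteratedDeriv m f (u t))
      (fun ν => iteratedDeriv ν u t / (ν.factorial : ℝ))]
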